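/- Let R be a domain, n ≥ 1, and let B = R[x₁^{±1},…,xₙ^{±1}] be the Laurent polynomial ring in n variables over R. Let M be a submonoid of ℤⁿ, ⟨M⟩ the subgroup of ℤⁿ generated by M, and Cone(⟨M⟩) the set of all finite nonnegative real combinations of elements of ⟨M⟩ in ℝⁿ (where ℤⁿ is embedded in ℝⁿ). Then R[M] is quasi-factorially closed in B if and only if Cone(⟨M⟩) ∩ ℤⁿ = ⟨M⟩. -/

import Mathlib

/-- An `R`-subalgebra `A` of `B` is quasi-factorially closed (qfc) in `B`. -/
def IsQfc {R B : Type*} [CommSemiring R] [CommRing B] [Algebra R B] (A : Subalgebra R B) : Prop :=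
  ∀ a b : B, a ≠ 0 → b ≠ 0 → a * b ∈ A →
    ∃ u v : Bˣ, (u : B) * a ∈ A ∧ (v : B) * b ∈ A

/-- For a submonoid `M ⊆ ℤⁿ`, the `R`-subalgebra `R[M]` of the Laurent polynomial ring. -/
noncomputable def monomialSubalgebra (R : Type*) [CommRing R] {n : ℕ}
    (M : AddSubmonoid (Fin n → ℤ)) : Subalgebra R (AddMonoidAlgebra R (Fin n → ℤ)) :=
  Algebra.adjoin R (AddMonoidAlgebra.of' R (Fin n → ℤ) '' (M : Set (Fin n → ℤ)))

/-- The cone of a subset `D ⊆ ℤⁿ` in `ℝⁿ`: all finite nonnegative real combinations of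
elements of `D` (where `ℤⁿ` is embedded in `ℝⁿ`). -/
def coneOf {n : ℕ} (D : Set (Fin n → ℤ)) : Set (Fin n → ℝ) :=
  {x | ∃ c : (Fin n → ℤ) →₀ ℝ, (↑c.support : Set (Fin n → ℤ)) ⊆ D ∧ (∀ a, 0 ≤ c a) ∧
      x = c.sum fun a t => t • fun i => ((a i : ℝ))}


set_option linter.unusedSectionVars false

namespace QfcProof

variable {R : Type*} [CommRing R] [IsDomain R] {n : ℕ} {M : AddSubmonoid (Fin n → ℤ)}


/-- The subalgebra of elements supported in `M`, as an explicit construction. -/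
def suppAlg (R : Type*) [CommRing R] {n : ℕ} (M : AddSubmonoid (Fin n → ℤ)) :
    Subalgebra R (AddMonoidAlgebra R (Fin n → ℤ)) where
  carrier := {f | ∀ x ∈ f.coeff.support, x ∈ M}
  mul_mem' := by
    classical
    intro f g hf hg x hx
    obtain ⟨p, hp, q, hq, rfl⟩ := Finset.mem_add.mp (AddMonoidAlgebra.support_coeff_mul_subset f g hx)
    exact add_mem (hf p hp) (hg q hq)
  add_mem' := by
    classical
    intro f g hf hg x hx
    rcases Finset.mem_union.mp (Finsupp.support_add hx) with h | h
    exacts [hf x h, hg x h]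
  one_mem' := by
    intro x hx
    rw [AddMonoidAlgebra.one_def, AddMonoidAlgebra.coeff_single] at hx
    have := Finsupp.support_single_subset hx
    simp only [Finset.mem_singleton] at this
    simpa [this] using M.zero_mem
  algebraMap_mem' := by
    intro r x hx
    rw [AddMonoidAlgebra.coe_algebraMap, Function.comp_apply, AddMonoidAlgebra.coeff_single] at hx
    have := Finsupp.support_single_subset hx
    simp only [Finset.mem_singleton] at this
    simpa [this] using M.zero_mem

theorem mem_monomialSubalgebra_iff {f : AddMonoidAlgebra R (Fin n → ℤ)} :
    f ∈ monomialSubalgebra R M ↔ ∀ x ∈ f.coeff.support, x ∈ M := by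
  constructor
  · intro hf
    have : monomialSubalgebra R M ≤ suppAlg R M := by
      rw [monomialSubalgebra, Algebra.adjoin_le_iff]
      rintro - ⟨m, hm, rfl⟩
      intro x hx
      have := Finsupp.support_single_subset (by simpa [AddMonoidAlgebra.of'] using hx :
        x ∈ (Finsupp.single m (1:R)).support)
      simp only [Finset.mem_singleton] at this
      simpa [this] using hm
    exact this hf
  · intro hf
    have : f = f.coeff.sum (fun m r => r • AddMonoidAlgebra.of' R (Fin n → ℤ) m) := by
      show f = f.coeff.sum fun m r => r • AddMonoidAlgebra.single m (1:R)
      simp_rw [AddMonoidAlgebra.smul_single', mul_one]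
      exact (AddMonoidAlgebra.sum_coeff_single f).symm
    rw [this]
    refine Subalgebra.sum_mem _ fun m hm => ?_
    exact Subalgebra.smul_mem _
      (Algebra.subset_adjoin (Set.mem_image_of_mem _ (hf m hm))) _



theorem exists_max_pair (f g : AddMonoidAlgebra R (Fin n → ℤ)) (hf : f ≠ 0) (hg : g ≠ 0)
    (lam : (Fin n → ℤ) →+ ℝ) :
    ∃ s ∈ f.coeff.support, ∃ t ∈ g.coeff.support, (s + t) ∈ (f * g).coeff.support ∧
      (∀ s' ∈ f.coeff.support, lam s' ≤ lam s) ∧ (∀ t' ∈ g.coeff.support, lam t' ≤ lam t) := by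
  classical
  set A : Finset (Fin n → ℤ) := f.coeff.support.filter (fun s => ∀ s' ∈ f.coeff.support, lam s' ≤ lam s)
    with hA
  set B : Finset (Fin n → ℤ) := g.coeff.support.filter (fun t => ∀ t' ∈ g.coeff.support, lam t' ≤ lam t)
    with hB
  have hAne : A.Nonempty := by
    obtain ⟨s, hs, hmax⟩ := Finset.exists_max_image f.coeff.support lam
      (Finsupp.support_nonempty_iff.mpr (mt AddMonoidAlgebra.coeff_eq_zero.mp hf))
    exact ⟨s, Finset.mem_filter.mpr ⟨hs, hmax⟩⟩
  have hBne : B.Nonempty := by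
    obtain ⟨t, ht, hmax⟩ := Finset.exists_max_image g.coeff.support lam
      (Finsupp.support_nonempty_iff.mpr (mt AddMonoidAlgebra.coeff_eq_zero.mp hg))
    exact ⟨t, Finset.mem_filter.mpr ⟨ht, hmax⟩⟩
  obtain ⟨a₀, ha₀, b₀, hb₀, hu⟩ := UniqueSums.uniqueAdd_of_nonempty hAne hBne
  obtain ⟨ha₀f, ha₀max⟩ := Finset.mem_filter.mp ha₀
  obtain ⟨hb₀g, hb₀max⟩ := Finset.mem_filter.mp hb₀
  have hu' : UniqueAdd f.coeff.support g.coeff.support a₀ b₀ := by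
    intro s t hs ht he
    have h1 : lam s + lam t = lam a₀ + lam b₀ := by
      have := congrArg lam he
      rwa [map_add, map_add] at this
    have hs1 : lam s ≤ lam a₀ := ha₀max s hs
    have ht1 : lam t ≤ lam b₀ := hb₀max t ht
    have hs2 : lam s = lam a₀ := by linarith
    have ht2 : lam t = lam b₀ := by linarith
    refine hu ?_ ?_ he
    · exact Finset.mem_filter.mpr ⟨hs, fun s' hs' => hs2 ▸ ha₀max s' hs'⟩
    · exact Finset.mem_filter.mpr ⟨ht, fun t' ht' => ht2 ▸ hb₀max t' ht'⟩
  refine ⟨a₀, ha₀f, b₀, hb₀g, ?_, ha₀max, hb₀max⟩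
  rw [Finsupp.mem_support_iff, AddMonoidAlgebra.coeff_mul_add_of_uniqueAdd hu']
  exact mul_ne_zero (Finsupp.mem_support_iff.mp ha₀f) (Finsupp.mem_support_iff.mp hb₀g)

theorem lam_const_on_support {f g : AddMonoidAlgebra R (Fin n → ℤ)} (hf : f ≠ 0) (hg : g ≠ 0)
    (lam : (Fin n → ℤ) →+ ℝ) (h0 : ∀ x ∈ (f * g).coeff.support, lam x = 0) :
    ∀ s ∈ f.coeff.support, ∀ s' ∈ f.coeff.support, lam s = lam s' := by
  obtain ⟨s₁, hs₁, t₁, ht₁, hm₁, hmax₁, hmax₁'⟩ := exists_max_pair f g hf hg lam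
  obtain ⟨s₂, hs₂, t₂, ht₂, hm₂, hmax₂, hmax₂'⟩ := exists_max_pair f g hf hg (-lam)
  have e₁ : lam s₁ + lam t₁ = 0 := by
    have := h0 _ hm₁; rwa [map_add] at this
  have e₂ : lam s₂ + lam t₂ = 0 := by
    have := h0 _ hm₂; rwa [map_add] at this
  have hmin₂ : ∀ s' ∈ f.coeff.support, lam s₂ ≤ lam s' := fun s' hs' => by
    have := hmax₂ s' hs'; simpa using this
  have hmin₂' : ∀ t' ∈ g.coeff.support, lam t₂ ≤ lam t' := fun t' ht' => by
    have := hmax₂' t' ht'; simpa using this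
  have key : lam s₁ = lam s₂ := by
    have h1 := hmin₂' t₁ ht₁
    have h2 := hmax₁ s₂ hs₂
    linarith
  intro s hs s' hs'
  have l1 := hmax₁ s hs
  have l2 := hmin₂ s hs
  have l3 := hmax₁ s' hs'
  have l4 := hmin₂ s' hs'
  linarith

def coordHom (n : ℕ) (i : Fin n) : (Fin n → ℤ) →+ ℝ where
  toFun a := (a i : ℝ)
  map_zero' := by simp
  map_add' a b := by simp

theorem unit_support_singleton (u : (AddMonoidAlgebra R (Fin n → ℤ))ˣ) :
    ∃ w, (u : AddMonoidAlgebra R (Fin n → ℤ)).coeff.support = {w} := by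
  classical
  set f : AddMonoidAlgebra R (Fin n → ℤ) := ↑u
  set g : AddMonoidAlgebra R (Fin n → ℤ) := ↑u⁻¹
  have hfg : f * g = 1 := u.mul_inv
  have hf : f ≠ 0 := u.ne_zero
  have hg : g ≠ 0 := u⁻¹.ne_zero
  have h0 : ∀ lam : (Fin n → ℤ) →+ ℝ, ∀ x ∈ (f * g).coeff.support, lam x = 0 := by
    intro lam x hx
    rw [hfg, AddMonoidAlgebra.one_def, AddMonoidAlgebra.coeff_single] at hx
    have := Finsupp.support_single_subset hx
    simp only [Finset.mem_singleton] at this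
    rw [this, map_zero]
  obtain ⟨w, hw⟩ := Finsupp.support_nonempty_iff.mpr (mt AddMonoidAlgebra.coeff_eq_zero.mp hf)
  refine ⟨w, ?_⟩
  ext x
  simp only [Finset.mem_singleton]
  constructor
  · intro hx
    funext i
    have := lam_const_on_support hf hg (coordHom n i) (h0 _) x hx w hw
    have : ((x i : ℝ)) = (w i : ℝ) := this
    exact_mod_cast this
  · rintro rfl; exact hw



def castR {n : ℕ} (a : Fin n → ℤ) : Fin n → ℝ := fun i => (a i : ℝ)
def castQ {n : ℕ} (a : Fin n → ℤ) : Fin n → ℚ := fun i => (a i : ℚ)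

theorem castR_add (a b : Fin n → ℤ) : castR (a + b) = castR a + castR b := by
  funext i; simp [castR]

theorem castR_neg (a : Fin n → ℤ) : castR (-a) = - castR a := by
  funext i; simp [castR]

theorem castR_sub (a b : Fin n → ℤ) : castR (a - b) = castR a - castR b := by
  funext i; simp [castR]

theorem castQ_inj : Function.Injective (castQ (n := n)) := by
  intro a b h
  funext i
  have h2 : (a i : ℚ) = (b i : ℚ) := congrFun h i
  exact_mod_cast h2

theorem cone_subset_span (D : Set (Fin n → ℤ)) :
    coneOf D ⊆ ↑(Submodule.span ℝ (castR '' D)) := by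
  rintro x ⟨c, hsupp, hpos, rfl⟩
  refine Submodule.sum_mem _ fun a ha => ?_
  exact Submodule.smul_mem _ _ (Submodule.subset_span ⟨a, hsupp ha, rfl⟩)

theorem cone_zero (D : Set (Fin n → ℤ)) : (0 : Fin n → ℝ) ∈ coneOf D := by
  exact ⟨0, by simp, fun a => le_refl 0, by simp [Finsupp.sum]⟩

theorem cone_mem_castR {D : Set (Fin n → ℤ)} {g : Fin n → ℤ} (hg : g ∈ D) :
    castR g ∈ coneOf D := by
  refine ⟨Finsupp.single g 1, ?_, ?_, ?_⟩
  · intro a ha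
    have := Finsupp.support_single_subset (Finset.mem_coe.mp ha)
    simp only [Finset.mem_singleton] at this
    simpa [this] using hg
  · intro a
    rw [Finsupp.single_apply]
    split <;> norm_num
  · rw [Finsupp.sum_single_index (by simp)]
    rw [one_smul]
    rfl

theorem cone_add {D : Set (Fin n → ℤ)} {x y : Fin n → ℝ}
    (hx : x ∈ coneOf D) (hy : y ∈ coneOf D) : x + y ∈ coneOf D := by
  classical
  obtain ⟨c, hc, hcpos, rfl⟩ := hx
  obtain ⟨d, hd, hdpos, rfl⟩ := hy
  refine ⟨c + d, ?_, ?_, ?_⟩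
  · intro a ha
    rcases Finset.mem_union.mp (Finsupp.support_add (by exact_mod_cast ha)) with h | h
    exacts [hc h, hd h]
  · intro a; rw [Finsupp.add_apply]; exact add_nonneg (hcpos a) (hdpos a)
  · rw [Finsupp.sum_add_index (fun a _ => by simp) (fun a _ t₁ t₂ => add_smul t₁ t₂ _)]

theorem cone_smul_nonneg {D : Set (Fin n → ℤ)} {x : Fin n → ℝ} {r : ℝ}
    (hr : 0 ≤ r) (hx : x ∈ coneOf D) : r • x ∈ coneOf D := by
  obtain ⟨c, hc, hcpos, rfl⟩ := hx
  refine ⟨r • c, ?_, ?_, ?_⟩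
  · intro a ha
    have h2 : a ∈ c.support := Finsupp.support_smul (Finset.mem_coe.mp ha)
    exact hc h2
  · intro a; rw [Finsupp.smul_apply]; exact mul_nonneg hr (hcpos a)
  · rw [Finsupp.sum_smul_index (h := fun (a : Fin n → ℤ) (t : ℝ) => t • fun i => ((a i : ℝ)))
      (fun a => zero_smul ℝ _), Finsupp.smul_sum]
    simp_rw [mul_smul]

theorem cone_neg {G : AddSubgroup (Fin n → ℤ)} {x : Fin n → ℝ}
    (hx : x ∈ coneOf (G : Set (Fin n → ℤ))) : -x ∈ coneOf (G : Set (Fin n → ℤ)) := by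
  classical
  obtain ⟨c, hc, hcpos, rfl⟩ := hx
  refine ⟨Finsupp.mapDomain Neg.neg c, ?_, ?_, ?_⟩
  · intro a ha
    have h2 : a ∈ (c.support.image Neg.neg) := by
      rw [← Finsupp.mapDomain_support_of_injective neg_injective]
      exact_mod_cast ha
    obtain ⟨b, hb, rfl⟩ := Finset.mem_image.mp h2
    exact neg_mem (hc hb)
  · intro a
    have : a = -(-a) := (neg_neg a).symm
    rw [this, show (-(-a) : Fin n → ℤ) = Neg.neg (-a) from rfl,
      Finsupp.mapDomain_apply neg_injective]
    exact hcpos _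
  · rw [Finsupp.sum_mapDomain_index (h := fun (a : Fin n → ℤ) (t : ℝ) => t • fun i => ((a i : ℝ)))
      (fun a => zero_smul ℝ _) (fun a t₁ t₂ => add_smul t₁ t₂ _)]
    simp only [Finsupp.sum]
    rw [← Finset.sum_neg_distrib]
    refine Finset.sum_congr rfl fun a ha => ?_
    show -(c a • castR a) = c a • castR (-a)
    rw [castR_neg, smul_neg]

theorem span_subset_cone (G : AddSubgroup (Fin n → ℤ)) {x : Fin n → ℝ}
    (hx : x ∈ Submodule.span ℝ (castR '' (G : Set (Fin n → ℤ)))) :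
    x ∈ coneOf (G : Set (Fin n → ℤ)) := by
  induction hx using Submodule.span_induction with
  | mem y hy => obtain ⟨g, hg, rfl⟩ := hy; exact cone_mem_castR hg
  | zero => exact cone_zero _
  | add y z _ _ hy hz => exact cone_add hy hz
  | smul r y _ hy =>
    rcases le_or_gt 0 r with hr | hr
    · exact cone_smul_nonneg hr hy
    · have : r • y = (-r) • (-y) := by rw [neg_smul_neg]
      rw [this]
      exact cone_smul_nonneg (by linarith) (cone_neg hy)



theorem castQ_add (a b : Fin n → ℤ) : castQ (a + b) = castQ a + castQ b := by
  funext i; simp [castQ]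

theorem castQ_nsmul (k : ℕ) (a : Fin n → ℤ) : castQ (k • a) = (k : ℚ) • castQ a := by
  funext i; simp [castQ]

theorem castQ_zsmul (k : ℤ) (a : Fin n → ℤ) : castQ (k • a) = (k : ℚ) • castQ a := by
  funext i; simp [castQ]

theorem dual_sep {K : Type*} [Field K] (p : Submodule K (Fin n → K)) {x : Fin n → K}
    (hx : x ∉ p) : ∃ F : (Fin n → K) →ₗ[K] K, F x ≠ 0 ∧ ∀ y ∈ p, F y = 0 := by
  obtain ⟨F, hFx, hFp⟩ := p.exists_dual_map_eq_bot_of_notMem hx inferInstance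
  refine ⟨F, hFx, fun y hy => ?_⟩
  have : F y ∈ p.map F := Submodule.mem_map_of_mem hy
  rwa [hFp, Submodule.mem_bot] at this

theorem exists_nsmul_mem (G : AddSubgroup (Fin n → ℤ)) {z : Fin n → ℤ}
    (hz : castR z ∈ Submodule.span ℝ (castR '' (G : Set (Fin n → ℤ)))) :
    ∃ k : ℕ, 0 < k ∧ (k • z) ∈ G := by
  classical
  -- Step A: rationalize
  have hQ : castQ z ∈ Submodule.span ℚ (castQ '' (G : Set (Fin n → ℤ))) := by
    by_contra hznot
    obtain ⟨F, hFx, hFp⟩ := dual_sep _ hznot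
    set FR : (Fin n → ℝ) →ₗ[ℝ] ℝ :=
      ∑ i : Fin n, ((F (fun j => if i = j then (1:ℚ) else 0) : ℚ) : ℝ) •
        (LinearMap.proj i : (Fin n → ℝ) →ₗ[ℝ] ℝ) with hFR
    have hFRapp : ∀ y : Fin n → ℝ,
        FR y = ∑ i : Fin n, ((F (fun j => if i = j then (1:ℚ) else 0) : ℚ) : ℝ) * y i := by
      intro y
      rw [hFR]
      simp [LinearMap.sum_apply, LinearMap.smul_apply, LinearMap.proj_apply, smul_eq_mul]
    have compat : ∀ a : Fin n → ℤ, FR (castR a) = ((F (castQ a) : ℚ) : ℝ) := by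
      intro a
      rw [hFRapp, LinearMap.pi_apply_eq_sum_univ F (castQ a)]
      push_cast
      refine Finset.sum_congr rfl fun i _ => ?_
      rw [smul_eq_mul]
      push_cast [castQ, castR]
      ring
    have hvanish : ∀ y ∈ Submodule.span ℝ (castR '' (G : Set (Fin n → ℤ))), FR y = 0 := by
      intro y hy
      have hle : Submodule.span ℝ (castR '' (G : Set (Fin n → ℤ))) ≤ LinearMap.ker FR := by
        rw [Submodule.span_le]
        rintro - ⟨g, hg, rfl⟩
        rw [SetLike.mem_coe, LinearMap.mem_ker, compat]
        have : F (castQ g) = 0 := hFp _ (Submodule.subset_span ⟨g, hg, rfl⟩)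
        rw [this]; norm_num
      exact LinearMap.mem_ker.mp (hle hy)
    have : FR (castR z) = 0 := hvanish _ hz
    rw [compat] at this
    exact hFx (by exact_mod_cast this)
  -- Step B: clear denominators
  have key : ∀ y ∈ Submodule.span ℚ (castQ '' (G : Set (Fin n → ℤ))),
      ∃ k : ℕ, 0 < k ∧ ∃ g ∈ G, castQ g = (k : ℚ) • y := by
    intro y hy
    induction hy using Submodule.span_induction with
    | mem y hy =>
      obtain ⟨g, hg, rfl⟩ := hy
      exact ⟨1, one_pos, g, hg, by simp⟩
    | zero =>
      refine ⟨1, one_pos, 0, zero_mem _, ?_⟩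
      funext i; simp [castQ]
    | add y z _ _ hy hz =>
      obtain ⟨k₁, hk₁, g₁, hg₁, he₁⟩ := hy
      obtain ⟨k₂, hk₂, g₂, hg₂, he₂⟩ := hz
      refine ⟨k₁ * k₂, Nat.mul_pos hk₁ hk₂, k₂ • g₁ + k₁ • g₂,
        add_mem (nsmul_mem hg₁ k₂) (nsmul_mem hg₂ k₁), ?_⟩
      rw [castQ_add, castQ_nsmul, castQ_nsmul, he₁, he₂]
      rw [smul_smul, smul_smul, smul_add]
      have e1 : (k₂ : ℚ) * k₁ = ((k₁ * k₂ : ℕ) : ℚ) := by push_cast; ring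
      have e2 : (k₁ : ℚ) * k₂ = ((k₁ * k₂ : ℕ) : ℚ) := by push_cast; ring
      rw [e1, e2]
    | smul q y _ hy =>
      obtain ⟨k, hk, g, hg, he⟩ := hy
      have hq : (q.num : ℚ) = q * (q.den : ℚ) := by
        have hden : (q.den : ℚ) ≠ 0 := Nat.cast_ne_zero.mpr q.den_nz
        have h1 := Rat.num_div_den q
        rw [div_eq_iff hden] at h1
        rw [h1]
      refine ⟨k * q.den, Nat.mul_pos hk q.pos, q.num • g, zsmul_mem hg q.num, ?_⟩
      rw [castQ_zsmul, he, smul_smul]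
      rw [smul_smul, hq]
      push_cast
      ring_nf
  obtain ⟨k, hk, g, hg, he⟩ := key _ hQ
  refine ⟨k, hk, ?_⟩
  have : castQ g = castQ (k • z) := by rw [he, castQ_nsmul]
  rwa [castQ_inj this] at hg



theorem mem_closure_diff {M : AddSubmonoid (Fin n → ℤ)} {g : Fin n → ℤ}
    (hg : g ∈ AddSubgroup.closure (M : Set (Fin n → ℤ))) :
    ∃ p ∈ M, ∃ q ∈ M, g = p - q := by
  induction hg using AddSubgroup.closure_induction with
  | mem x hx => exact ⟨x, hx, 0, zero_mem _, by simp⟩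
  | zero => exact ⟨0, zero_mem _, 0, zero_mem _, by simp⟩
  | add x y _ _ hx hy =>
    obtain ⟨p₁, hp₁, q₁, hq₁, rfl⟩ := hx
    obtain ⟨p₂, hp₂, q₂, hq₂, rfl⟩ := hy
    exact ⟨p₁ + p₂, add_mem hp₁ hp₂, q₁ + q₂, add_mem hq₁ hq₂, by abel⟩
  | neg x _ hx =>
    obtain ⟨p, hp, q, hq, rfl⟩ := hx
    exact ⟨q, hq, p, hp, by abel⟩

theorem exists_translate {M : AddSubmonoid (Fin n → ℤ)} (F : Finset (Fin n → ℤ))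
    (hF : ∀ f ∈ F, f ∈ AddSubgroup.closure (M : Set (Fin n → ℤ))) :
    ∃ m ∈ M, ∀ f ∈ F, f + m ∈ M := by
  classical
  induction F using Finset.induction_on with
  | empty => exact ⟨0, zero_mem _, by simp⟩
  | @insert a s hnot ih =>
    obtain ⟨m, hm, hmem⟩ := ih (fun f hf => hF f (Finset.mem_insert_of_mem hf))
    obtain ⟨p, hp, q, hq, he⟩ := mem_closure_diff (hF _ (Finset.mem_insert_self _ _))
    refine ⟨m + q, add_mem hm hq, ?_⟩
    intro f hf
    rcases Finset.mem_insert.mp hf with rfl | hf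
    · have h2 : f + (m + q) = p + m := by rw [he]; abel
      rw [h2]; exact add_mem hp hm
    · have h2 : f + (m + q) = (f + m) + q := by abel
      rw [h2]; exact add_mem (hmem f hf) hq

theorem isUnit_single (w : Fin n → ℤ) :
    IsUnit (AddMonoidAlgebra.single w (1 : R) : AddMonoidAlgebra R (Fin n → ℤ)) := by
  have h : AddMonoidAlgebra.single w (1:R) * AddMonoidAlgebra.single (-w) 1 = 1 := by
    rw [AddMonoidAlgebra.single_mul_single]
    simp [AddMonoidAlgebra.one_def]
  exact IsUnit.of_mul_eq_one _ h


end QfcProof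

open QfcProof in
/-- `R[M]` is qfc in `B = R[x₁^{±1},…,xₙ^{±1}]` iff `Cone(⟨M⟩) ∩ ℤⁿ = ⟨M⟩`. -/
theorem monomialSubalgebra_isQfc_iff_cone
    (R : Type*) [CommRing R] [IsDomain R] (n : ℕ) (hn : 1 ≤ n)
    (M : AddSubmonoid (Fin n → ℤ)) :
    IsQfc (monomialSubalgebra R M) ↔
      {a : Fin n → ℤ |
          (fun i => (a i : ℝ)) ∈
            coneOf ((AddSubgroup.closure (M : Set (Fin n → ℤ)) : AddSubgroup (Fin n → ℤ)) :
              Set (Fin n → ℤ))} =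
        ((AddSubgroup.closure (M : Set (Fin n → ℤ)) : AddSubgroup (Fin n → ℤ)) :
          Set (Fin n → ℤ)) := by
  classical
  set G := AddSubgroup.closure (M : Set (Fin n → ℤ)) with hG
  constructor
  · intro hqfc
    ext a
    simp only [Set.mem_setOf_eq, SetLike.mem_coe]
    constructor
    · intro ha
      by_contra hnot
      have hspan := cone_subset_span (G : Set (Fin n → ℤ)) ha
      obtain ⟨k, hk, hkz⟩ := exists_nsmul_mem G hspan
      have hane : a ≠ 0 := fun h => hnot (by rw [h]; exact zero_mem G)
      obtain ⟨p, hp, q, hq, he⟩ := mem_closure_diff hkz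
      set f : ℕ → AddMonoidAlgebra R (Fin n → ℤ) :=
        fun j => AddMonoidAlgebra.single (j • a + q) 1 with hf
      set A : AddMonoidAlgebra R (Fin n → ℤ) :=
        AddMonoidAlgebra.single a 1 - AddMonoidAlgebra.single 0 1 with hA
      set Bb : AddMonoidAlgebra R (Fin n → ℤ) := (Finset.range k).sum f with hBb
      have hstep : ∀ j : ℕ, A * f j = f (j + 1) - f j := by
        intro j
        rw [hA, hf]
        simp only
        rw [sub_mul, AddMonoidAlgebra.single_mul_single, AddMonoidAlgebra.single_mul_single,
          one_mul]
        congr 2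
        · rw [succ_nsmul]; abel
        · abel
      have hABprod : A * Bb = AddMonoidAlgebra.single p 1 - AddMonoidAlgebra.single q 1 := by
        rw [hBb, Finset.mul_sum]
        rw [Finset.sum_congr rfl (fun j _ => hstep j), Finset.sum_range_sub f]
        have h1 : f k = AddMonoidAlgebra.single p 1 := by
          rw [hf]; simp only; congr 1; rw [he]; abel
        have h2 : f 0 = AddMonoidAlgebra.single q 1 := by
          rw [hf]; simp only; rw [zero_nsmul, zero_add]
        rw [h1, h2]
      have hAne : A ≠ 0 := by
        intro h0
        have h1 : A.coeff a = 1 := by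
          rw [hA, AddMonoidAlgebra.coeff_sub, Finsupp.sub_apply, AddMonoidAlgebra.coeff_single, AddMonoidAlgebra.coeff_single]
          rw [Finsupp.single_eq_same, Finsupp.single_eq_of_ne' (fun h => hane h.symm), sub_zero]
        rw [h0] at h1
        simp only [AddMonoidAlgebra.coeff_zero, Finsupp.zero_apply] at h1
        exact one_ne_zero h1.symm
      have hBne : Bb ≠ 0 := by
        intro h0
        have h1 : Bb.coeff q = 1 := by
          rw [hBb, AddMonoidAlgebra.coeff_sum, Finset.sum_apply']
          rw [Finset.sum_eq_single 0 (fun j hj hne => by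
              refine Finsupp.single_eq_of_ne' ?_
              intro hjq
              have hj0 : j • a = 0 := by
                have := hjq
                rwa [add_eq_right] at this
              have hj0' : (j : ℤ) • a = 0 := by rwa [natCast_zsmul]
              rcases smul_eq_zero.mp hj0' with h | h
              · exact hne (by exact_mod_cast h)
              · exact hane h)
            (fun h => absurd (Finset.mem_range.mpr hk) h)]
          rw [zero_nsmul, zero_add, AddMonoidAlgebra.coeff_single, Finsupp.single_eq_same]
        rw [h0] at h1
        simp only [AddMonoidAlgebra.coeff_zero, Finsupp.zero_apply] at h1
        exact one_ne_zero h1.symm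
      have hABmem : A * Bb ∈ monomialSubalgebra R M := by
        rw [QfcProof.mem_monomialSubalgebra_iff, hABprod]
        intro x hx
        rcases Finset.mem_union.mp (Finsupp.support_sub hx) with h | h
        · have := Finsupp.support_single_subset h
          simp only [Finset.mem_singleton] at this
          rw [this]; exact hp
        · have := Finsupp.support_single_subset h
          simp only [Finset.mem_singleton] at this
          rw [this]; exact hq
      obtain ⟨u, v, hu, hv⟩ := hqfc A Bb hAne hBne hABmem
      obtain ⟨w, hw⟩ := QfcProof.unit_support_singleton u
      obtain ⟨hr, hueq⟩ := Finsupp.support_eq_singleton.mp hw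
      have hprod : (u : AddMonoidAlgebra R (Fin n → ℤ)) * A =
          AddMonoidAlgebra.single (w + a) ((u : AddMonoidAlgebra R (Fin n → ℤ)).coeff w) -
          AddMonoidAlgebra.single w ((u : AddMonoidAlgebra R (Fin n → ℤ)).coeff w) := by
        have hueq' : (u : AddMonoidAlgebra R (Fin n → ℤ)) =
            AddMonoidAlgebra.single w ((u : AddMonoidAlgebra R (Fin n → ℤ)).coeff w) :=
          AddMonoidAlgebra.coeff_injective hueq
        conv_lhs => rw [hueq']
        rw [hA, mul_sub, AddMonoidAlgebra.single_mul_single,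
          AddMonoidAlgebra.single_mul_single, mul_one, add_zero]
      rw [QfcProof.mem_monomialSubalgebra_iff] at hu
      have hwa : (w + a) ∈ M := by
        refine hu _ (Finsupp.mem_support_iff.mpr ?_)
        rw [hprod, AddMonoidAlgebra.coeff_sub, Finsupp.sub_apply, AddMonoidAlgebra.coeff_single,
          AddMonoidAlgebra.coeff_single, Finsupp.single_eq_same,
          Finsupp.single_eq_of_ne' (fun h => hane ((left_eq_add).mp h)), sub_zero]
        exact hr
      have hwm : w ∈ M := by
        refine hu _ (Finsupp.mem_support_iff.mpr ?_)
        rw [hprod, AddMonoidAlgebra.coeff_sub, Finsupp.sub_apply, AddMonoidAlgebra.coeff_single,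
          AddMonoidAlgebra.coeff_single, Finsupp.single_eq_same,
          Finsupp.single_eq_of_ne' (fun h => hane ((add_eq_left).mp h)), zero_sub,
          neg_ne_zero]
        exact hr
      apply hnot
      have hsub : (w + a) - w ∈ G :=
        sub_mem (AddSubgroup.subset_closure hwa) (AddSubgroup.subset_closure hwm)
      simpa using hsub
    · intro ha
      exact QfcProof.cone_mem_castR (D := (G : Set (Fin n → ℤ))) ha
  · intro heq
    intro A B hA hB hAB
    rw [QfcProof.mem_monomialSubalgebra_iff] at hAB
    have main : ∀ f g : AddMonoidAlgebra R (Fin n → ℤ), f ≠ 0 → g ≠ 0 →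
        (∀ x ∈ (f * g).coeff.support, x ∈ M) →
        ∃ u : (AddMonoidAlgebra R (Fin n → ℤ))ˣ,
          (u : AddMonoidAlgebra R (Fin n → ℤ)) * f ∈ monomialSubalgebra R M := by
      intro f g hf hg hM
      obtain ⟨s₀, hs₀⟩ := Finsupp.support_nonempty_iff.mpr (mt AddMonoidAlgebra.coeff_eq_zero.mp hf)
      have hcoset : ∀ s ∈ f.coeff.support, s - s₀ ∈ G := by
        intro s hs
        by_contra hnot
        have hnotspan : QfcProof.castR (s - s₀) ∉
            Submodule.span ℝ (QfcProof.castR '' (G : Set (Fin n → ℤ))) := by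
          intro hsp
          have h1 := QfcProof.span_subset_cone G hsp
          have h2 : (s - s₀) ∈ {a : Fin n → ℤ |
              (fun i => ((a i : ℝ))) ∈ coneOf (G : Set (Fin n → ℤ))} := h1
          rw [heq] at h2
          exact hnot h2
        obtain ⟨F, hFx, hF0⟩ := QfcProof.dual_sep _ hnotspan
        set lam : (Fin n → ℤ) →+ ℝ :=
          { toFun := fun x => F (QfcProof.castR x),
            map_zero' := by
              show F (QfcProof.castR 0) = 0
              rw [show QfcProof.castR (0 : Fin n → ℤ) = 0 from
                funext fun i => by simp [QfcProof.castR], map_zero],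
            map_add' := fun x y => by
              show F (QfcProof.castR (x + y)) = F (QfcProof.castR x) + F (QfcProof.castR y)
              rw [QfcProof.castR_add, map_add] } with hlam
        have h0 : ∀ x ∈ (f * g).coeff.support, lam x = 0 := by
          intro x hx
          exact hF0 _ (Submodule.subset_span
            ⟨x, AddSubgroup.subset_closure (hM x hx), rfl⟩)
        have hconst := QfcProof.lam_const_on_support hf hg lam h0 s hs s₀ hs₀
        apply hFx
        rw [QfcProof.castR_sub, map_sub]
        have h3 : F (QfcProof.castR s) = F (QfcProof.castR s₀) := hconst
        rw [h3, sub_self]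
      obtain ⟨m, hm, hmem⟩ := QfcProof.exists_translate (M := M)
        (f.coeff.support.image (fun s => s - s₀)) (by
          intro x hx
          obtain ⟨s, hs, rfl⟩ := Finset.mem_image.mp hx
          exact hcoset s hs)
      obtain ⟨u, hueq⟩ := QfcProof.isUnit_single (R := R) (m - s₀)
      refine ⟨u, ?_⟩
      rw [QfcProof.mem_monomialSubalgebra_iff]
      intro x hx
      rw [hueq] at hx
      have hval : (AddMonoidAlgebra.single (m - s₀) (1:R) * f).coeff x = f.coeff (-(m - s₀) + x) := by
        rw [AddMonoidAlgebra.coeff_single_mul_apply, one_mul]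
      have hx' : (-(m - s₀) + x) ∈ f.coeff.support := by
        rw [Finsupp.mem_support_iff] at hx ⊢
        rw [← hval]
        exact hx
      have h3 := hmem _ (Finset.mem_image_of_mem (fun s => s - s₀) hx')
      have hxe : ((-(m - s₀) + x) - s₀) + m = x := by abel
      rwa [hxe] at h3
    obtain ⟨u, hu⟩ := main A B hA hB hAB
    obtain ⟨v, hv⟩ := main B A hB hA (by rwa [mul_comm])
    exact ⟨u, v, hu, hv⟩
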